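/- For every real x and every integer n ≥ 0, the neutrix limit as ε → 0⁺ of ∫_ε^{1−ε} t^{x−1} (log t)^n / (1−t) dt exists; that is, there exist a real number c and a negligible function N(ε) such that ∫_ε^{1−ε} t^{x−1} (log t)^n / (1−t) dt − N(ε) tends to c as ε → 0⁺. -/

import Mathlib

open MeasureTheory Real Filter Set

/-- A negligible function: a finite real linear combination of `ε ↦ ε^λ (log ε)^k`
with `λ < 0` real and `k ∈ ℕ`, and `ε ↦ (log ε)^k` with `k ≥ 1`. -/
def Negligible (N : ℝ → ℝ) : Prop :=
  ∃ (s : Finset (ℝ × ℕ)) (c : ℝ × ℕ → ℝ) (T : Finset ℕ) (d : ℕ → ℝ),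
    (∀ p ∈ s, p.1 < 0) ∧ (∀ k ∈ T, 1 ≤ k) ∧
    ∀ ε : ℝ, N ε = (∑ p ∈ s, c p * ε ^ p.1 * Real.log ε ^ p.2) +
      ∑ k ∈ T, d k * Real.log ε ^ k

/-- `NeutrixLim F c` : the neutrix limit of `F ε` as `ε → 0⁺` is `c`, i.e. there is a
negligible function `N` with `F ε − N ε → c` as `ε → 0⁺`. -/
def NeutrixLim (F : ℝ → ℝ) (c : ℝ) : Prop :=
  ∃ N : ℝ → ℝ, Negligible N ∧
    Tendsto (fun ε => F ε - N ε) (nhdsWithin 0 (Set.Ioi 0)) (nhds c)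

def NL (F : ℝ → ℝ) : Prop := ∃ c, NeutrixLim F c

lemma negligible_zero : Negligible (fun _ => 0) :=
  ⟨∅, fun _ => 0, ∅, fun _ => 0, by simp, by simp, by simp⟩

lemma sum_union_ite {α M : Type*} [DecidableEq α] [AddCommMonoid M] (s t : Finset α)
    (f : α → M) : ∑ p ∈ s ∪ t, (if p ∈ s then f p else 0) = ∑ p ∈ s, f p := by
  rw [Finset.sum_ite_mem, Finset.union_inter_cancel_left]

lemma Negligible.add {N M : ℝ → ℝ} (hN : Negligible N) (hM : Negligible M) :
    Negligible (fun ε => N ε + M ε) := by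
  obtain ⟨s₁, c₁, T₁, d₁, hs₁, hT₁, h₁⟩ := hN
  obtain ⟨s₂, c₂, T₂, d₂, hs₂, hT₂, h₂⟩ := hM
  refine ⟨s₁ ∪ s₂, fun p => (if p ∈ s₁ then c₁ p else 0) + (if p ∈ s₂ then c₂ p else 0),
    T₁ ∪ T₂, fun k => (if k ∈ T₁ then d₁ k else 0) + (if k ∈ T₂ then d₂ k else 0), ?_, ?_, ?_⟩
  · intro p hp; rcases Finset.mem_union.1 hp with h | h
    exacts [hs₁ p h, hs₂ p h]
  · intro k hk; rcases Finset.mem_union.1 hk with h | h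
    exacts [hT₁ k h, hT₂ k h]
  · intro ε
    simp only []
    rw [h₁ ε, h₂ ε]
    simp only [add_mul, Finset.sum_add_distrib, ite_mul, zero_mul]
    rw [sum_union_ite s₁ s₂ (fun p => c₁ p * ε ^ p.1 * Real.log ε ^ p.2),
      sum_union_ite T₁ T₂ (fun k => d₁ k * Real.log ε ^ k)]
    have : ∑ p ∈ s₁ ∪ s₂, (if p ∈ s₂ then c₂ p * ε ^ p.1 * Real.log ε ^ p.2 else 0)
        = ∑ p ∈ s₂, c₂ p * ε ^ p.1 * Real.log ε ^ p.2 := by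
      rw [Finset.union_comm]; exact sum_union_ite s₂ s₁ _
    rw [this]
    have : ∑ k ∈ T₁ ∪ T₂, (if k ∈ T₂ then d₂ k * Real.log ε ^ k else 0)
        = ∑ k ∈ T₂, d₂ k * Real.log ε ^ k := by
      rw [Finset.union_comm]; exact sum_union_ite T₂ T₁ _
    rw [this]; ring

lemma Negligible.const_mul {N : ℝ → ℝ} (a : ℝ) (hN : Negligible N) :
    Negligible (fun ε => a * N ε) := by
  obtain ⟨s, c, T, d, hs, hT, h⟩ := hN
  refine ⟨s, fun p => a * c p, T, fun k => a * d k, hs, hT, fun ε => ?_⟩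
  simp only []
  rw [h ε, mul_add, Finset.mul_sum, Finset.mul_sum]
  congr 1 <;> apply Finset.sum_congr rfl <;> intro p _ <;> ring

lemma NL.add {F G : ℝ → ℝ} (hF : NL F) (hG : NL G) : NL (fun ε => F ε + G ε) := by
  obtain ⟨c₁, N₁, hN₁, h₁⟩ := hF
  obtain ⟨c₂, N₂, hN₂, h₂⟩ := hG
  exact ⟨c₁ + c₂, fun ε => N₁ ε + N₂ ε, hN₁.add hN₂,
    (h₁.add h₂).congr (fun ε => by ring)⟩

lemma NL.const_mul {F : ℝ → ℝ} (a : ℝ) (hF : NL F) : NL (fun ε => a * F ε) := by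
  obtain ⟨c, N, hN, h⟩ := hF
  exact ⟨a * c, fun ε => a * N ε, hN.const_mul a,
    ((h.const_mul a).congr (fun ε => by ring))⟩

lemma NL.sub {F G : ℝ → ℝ} (hF : NL F) (hG : NL G) : NL (fun ε => F ε - G ε) := by
  have := hF.add (hG.const_mul (-1))
  have h : (fun ε => F ε + (-1) * G ε) = fun ε => F ε - G ε := by funext ε; ring
  rwa [h] at this

lemma NL.congr {F G : ℝ → ℝ} (h : ∀ᶠ ε in nhdsWithin (0:ℝ) (Set.Ioi 0), F ε = G ε)
    (hF : NL F) : NL G := by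
  obtain ⟨c, N, hN, ht⟩ := hF
  exact ⟨c, N, hN, ht.congr' (h.mono fun ε hε => by rw [hε])⟩

lemma NL_of_tendsto {F : ℝ → ℝ} {c : ℝ}
    (h : Tendsto F (nhdsWithin (0:ℝ) (Set.Ioi 0)) (nhds c)) : NL F :=
  ⟨c, fun _ => 0, negligible_zero, by simpa using h⟩

lemma NL_const (c : ℝ) : NL (fun _ => c) := NL_of_tendsto tendsto_const_nhds

lemma NL_negligible {N : ℝ → ℝ} (h : Negligible N) : NL N :=
  ⟨0, N, h, by simp⟩

lemma tendsto_rpow_nhds_zero {r : ℝ} (hr : 0 < r) :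
    Tendsto (fun t : ℝ => t ^ r) (nhdsWithin 0 (Set.Ioi 0)) (nhds 0) := by
  have h := (Real.continuousAt_rpow_const 0 r (Or.inr hr.le)).tendsto.mono_left
    (nhdsWithin_le_nhds (s := Set.Ioi (0:ℝ)))
  simpa [Real.zero_rpow hr.ne'] using h

lemma tendsto_rpow_mul_log_pow (a : ℝ) (ha : 0 < a) (n : ℕ) :
    Tendsto (fun t : ℝ => t ^ a * Real.log t ^ n) (nhdsWithin 0 (Set.Ioi 0)) (nhds 0) := by
  have hr : 0 < a / (n + 1) := by positivity
  have h1 : Tendsto (fun t : ℝ => Real.log t * t ^ (a / (n+1)))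
      (nhdsWithin 0 (Set.Ioi 0)) (nhds 0) := tendsto_log_mul_rpow_nhdsGT_zero hr
  have h2 : Tendsto (fun t : ℝ => t ^ (a / (n+1)) * (Real.log t * t ^ (a / (n+1))) ^ n)
      (nhdsWithin 0 (Set.Ioi 0)) (nhds (0 * 0 ^ n)) :=
    (tendsto_rpow_nhds_zero hr).mul (h1.pow n)
  rw [zero_mul] at h2
  refine h2.congr' ?_ |>.mono_left (le_refl _)
  filter_upwards [self_mem_nhdsWithin] with t (ht : 0 < t)
  rw [mul_pow, ← Real.rpow_natCast (t ^ (a/(n+1))) n, ← Real.rpow_mul ht.le]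
  rw [show t ^ (a/(n+1)) * (Real.log t ^ n * t ^ (a/(n+1) * n))
      = t ^ (a/(n+1)) * t ^ (a/(n+1) * n) * Real.log t ^ n by ring,
    ← Real.rpow_add ht]
  congr 2
  field_simp
  ring

lemma NL_monomial (mu : ℝ) (j : ℕ) :
    NL (fun ε => ε ^ mu * Real.log ε ^ j) := by
  rcases lt_trichotomy mu 0 with h | h | h
  · refine NL_negligible ⟨{(mu, j)}, fun _ => 1, ∅, fun _ => 0, ?_, by simp, fun ε => by simp⟩
    intro p hp; rw [Finset.mem_singleton] at hp; rw [hp]; exact h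
  · subst h
    rcases Nat.eq_zero_or_pos j with hj | hj
    · subst hj
      have : (fun ε : ℝ => ε ^ (0:ℝ) * Real.log ε ^ 0) = fun _ => 1 := by
        funext ε; simp
      rw [this]; exact NL_const 1
    · refine NL_negligible ⟨∅, fun _ => 0, {j}, fun _ => 1, by simp, ?_, fun ε => by simp⟩
      intro k hk; rw [Finset.mem_singleton] at hk; rw [hk]; exact hj
  · exact NL_of_tendsto (tendsto_rpow_mul_log_pow mu h j)

lemma cont1 (a : ℝ) (n : ℕ) :
    ContinuousOn (fun t : ℝ => t ^ a * Real.log t ^ n) (Set.Ioi 0) := by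
  exact (continuousOn_id.rpow_const (fun t ht => Or.inl (ne_of_gt ht))).mul
    ((Real.continuousOn_log.mono (fun t ht => ne_of_gt ht)).pow n)

lemma cont2 (a : ℝ) (n : ℕ) :
    ContinuousOn (fun t : ℝ => t ^ a * Real.log t ^ n / (1 - t)) (Set.Ioo 0 1) := by
  refine ((cont1 a n).mono Set.Ioo_subset_Ioi_self).div
    (continuousOn_const.sub continuousOn_id) ?_
  intro t ht
  exact sub_ne_zero_of_ne (Ne.symm (ne_of_lt ht.2))

lemma tendsto_left_endpoint {f : ℝ → ℝ} (hf : IntegrableOn f (Set.Icc 0 (1/2)) volume) :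
    Tendsto (fun ε => ∫ t in ε..(1/2:ℝ), f t) (nhdsWithin 0 (Set.Ioi 0))
      (nhds (∫ t in (0:ℝ)..(1/2:ℝ), f t)) := by
  have huIcc : Set.uIcc (0:ℝ) (1/2) = Set.Icc 0 (1/2) := Set.uIcc_of_le (by norm_num)
  have hcont := intervalIntegral.continuousOn_primitive_interval_left
    (f := f) (μ := volume) (a := 0) (b := (1/2:ℝ)) (by rwa [huIcc])
  have h0 : (0:ℝ) ∈ Set.uIcc (0:ℝ) (1/2) := Set.left_mem_uIcc
  have hw := (hcont 0 h0)
  rw [huIcc] at hw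
  have key : Tendsto (fun x => ∫ t in x..(1/2:ℝ), f t)
      (nhdsWithin 0 (Set.Icc 0 (1/2))) (nhds (∫ t in (0:ℝ)..(1/2:ℝ), f t)) := hw
  refine key.mono_left ?_
  rw [← nhdsWithin_Ioo_eq_nhdsGT (show (0:ℝ) < 1/2 by norm_num)]
  exact nhdsWithin_mono 0 Set.Ioo_subset_Icc_self

lemma tendsto_right_endpoint {f : ℝ → ℝ} (hf : IntegrableOn f (Set.Icc (1/2) 1) volume) :
    Tendsto (fun ε => ∫ t in (1/2:ℝ)..(1 - ε), f t) (nhdsWithin 0 (Set.Ioi 0))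
      (nhds (∫ t in (1/2:ℝ)..(1:ℝ), f t)) := by
  have huIcc : Set.uIcc (1/2:ℝ) 1 = Set.Icc (1/2) 1 := Set.uIcc_of_le (by norm_num)
  have hcont := intervalIntegral.continuousOn_primitive_interval
    (f := f) (μ := volume) (a := (1/2:ℝ)) (b := 1) (by rwa [huIcc])
  have h1 : (1:ℝ) ∈ Set.uIcc (1/2:ℝ) 1 := Set.right_mem_uIcc
  have hw := hcont 1 h1
  rw [huIcc] at hw
  have key : Tendsto (fun y => ∫ t in (1/2:ℝ)..y, f t)
      (nhdsWithin 1 (Set.Icc (1/2) 1)) (nhds (∫ t in (1/2:ℝ)..(1:ℝ), f t)) := hw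
  have hcomp : Tendsto (fun ε : ℝ => 1 - ε) (nhdsWithin 0 (Set.Ioi 0))
      (nhdsWithin 1 (Set.Icc (1/2) 1)) := by
    rw [tendsto_nhdsWithin_iff]
    constructor
    · have : Tendsto (fun ε : ℝ => 1 - ε) (nhds 0) (nhds (1 - 0)) :=
        (continuous_const.sub continuous_id).tendsto 0
      simpa using this.mono_left nhdsWithin_le_nhds
    · filter_upwards [Ioo_mem_nhdsGT_of_mem (show (0:ℝ) ∈ Set.Ico (0:ℝ) (1/2) by constructor <;> norm_num)]
        with ε hε
      obtain ⟨h1ε, h2ε⟩ := hε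
      constructor <;> [linarith; linarith]
  exact key.comp hcomp

lemma intervalIntegrable_I (a : ℝ) (n : ℕ) {u v : ℝ} (hu : 0 < u) (hv : 0 < v) :
    IntervalIntegrable (fun t => t ^ a * Real.log t ^ n) volume u v := by
  apply ContinuousOn.intervalIntegrable
  apply (cont1 a n).mono
  intro t ht
  exact lt_of_lt_of_le (lt_min hu hv) ht.1

lemma hasDerivAt_H (a : ℝ) (ha : a + 1 ≠ 0) (n : ℕ) {t : ℝ} (ht : 0 < t) :
    HasDerivAt (fun t : ℝ => t ^ (a+1) * Real.log t ^ n / (a+1))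
      (t ^ a * Real.log t ^ n + ((n : ℝ) / (a+1)) * (t ^ a * Real.log t ^ (n-1))) t := by
  have h1 : HasDerivAt (fun t : ℝ => t ^ (a+1)) ((a+1) * t ^ a) t := by
    have := Real.hasDerivAt_rpow_const (x := t) (p := a+1) (Or.inl ht.ne')
    simpa [add_sub_cancel_right] using this
  have h2 : HasDerivAt (fun t : ℝ => Real.log t ^ n) ((n : ℝ) * Real.log t ^ (n-1) * t⁻¹) t :=
    (Real.hasDerivAt_log ht.ne').pow n
  have h3 := (h1.mul h2).div_const (a+1)
  have e : ((a+1) * t ^ a * Real.log t ^ n + t ^ (a+1) * ((n : ℝ) * Real.log t ^ (n-1) * t⁻¹))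
      / (a+1) = t ^ a * Real.log t ^ n + ((n : ℝ) / (a+1)) * (t ^ a * Real.log t ^ (n-1)) := by
    rw [Real.rpow_add_one ht.ne']
    field_simp
  exact e ▸ h3

lemma ftc_I (a : ℝ) (ha : a + 1 ≠ 0) (n : ℕ) {ε : ℝ} (hε : 0 < ε) (hε2 : ε ≤ 1/2) :
    ∫ t in ε..(1/2:ℝ), (t ^ a * Real.log t ^ n + ((n : ℝ) / (a+1)) * (t ^ a * Real.log t ^ (n-1)))
      = (1/2:ℝ) ^ (a+1) * Real.log (1/2) ^ n / (a+1) - ε ^ (a+1) * Real.log ε ^ n / (a+1) := by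
  have hder : ∀ t ∈ Set.uIcc ε (1/2:ℝ),
      HasDerivAt (fun t : ℝ => t ^ (a+1) * Real.log t ^ n / (a+1))
        (t ^ a * Real.log t ^ n + ((n : ℝ) / (a+1)) * (t ^ a * Real.log t ^ (n-1))) t := by
    intro t ht
    rw [Set.uIcc_of_le hε2] at ht
    exact hasDerivAt_H a ha n (lt_of_lt_of_le hε ht.1)
  have hint : IntervalIntegrable
      (fun t => t ^ a * Real.log t ^ n + ((n : ℝ) / (a+1)) * (t ^ a * Real.log t ^ (n-1)))
      volume ε (1/2) :=
    (intervalIntegrable_I a n hε (by norm_num)).add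
      (((intervalIntegrable_I a (n-1) hε (by norm_num))).const_mul _)
  rw [intervalIntegral.integral_eq_sub_of_hasDerivAt hder hint]

lemma NL_I (a : ℝ) (n : ℕ) : NL (fun ε => ∫ t in ε..(1/2:ℝ), t ^ a * Real.log t ^ n) := by
  by_cases ha : a = -1
  · subst ha
    have key : ∀ ε : ℝ, 0 < ε → ε ≤ 1/2 →
        ∫ t in ε..(1/2:ℝ), t ^ (-1:ℝ) * Real.log t ^ n
          = Real.log (1/2) ^ (n+1) / ((n:ℝ)+1) - Real.log ε ^ (n+1) / ((n:ℝ)+1) := by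
      intro ε hε hε2
      have hder : ∀ t ∈ Set.uIcc ε (1/2:ℝ),
          HasDerivAt (fun t : ℝ => Real.log t ^ (n+1) / ((n:ℝ)+1))
            (t ^ (-1:ℝ) * Real.log t ^ n) t := by
        intro t ht
        rw [Set.uIcc_of_le hε2] at ht
        have ht0 : 0 < t := lt_of_lt_of_le hε ht.1
        have h2 : HasDerivAt (fun t : ℝ => Real.log t ^ (n+1))
            (((n:ℝ)+1) * Real.log t ^ n * t⁻¹) t := by
          have := (Real.hasDerivAt_log ht0.ne').pow (n+1)
          simp only [Nat.cast_add, Nat.cast_one, Nat.add_sub_cancel] at this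
          exact this
        have h3 := h2.div_const ((n:ℝ)+1)
        have e : ((n:ℝ)+1) * Real.log t ^ n * t⁻¹ / ((n:ℝ)+1) = t ^ (-1:ℝ) * Real.log t ^ n := by
          rw [Real.rpow_neg_one]
          have : ((n:ℝ)+1) ≠ 0 := by positivity
          field_simp
        exact e ▸ h3
      exact intervalIntegral.integral_eq_sub_of_hasDerivAt hder
        (intervalIntegrable_I (-1) n hε (by norm_num))
    have hneg : Negligible (fun ε : ℝ => (-(1/((n:ℝ)+1))) * Real.log ε ^ (n+1)) := by
      refine ⟨∅, fun _ => 0, {n+1}, fun _ => -(1/((n:ℝ)+1)), by simp, ?_, fun ε => by simp⟩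
      intro k hk; rw [Finset.mem_singleton] at hk; omega
    have hNL : NL (fun ε : ℝ => Real.log (1/2) ^ (n+1) / ((n:ℝ)+1)
        + (-(1/((n:ℝ)+1))) * Real.log ε ^ (n+1)) :=
      (NL_const _).add (NL_negligible hneg)
    refine NL.congr ?_ hNL
    filter_upwards [Ioo_mem_nhdsGT_of_mem
      (show (0:ℝ) ∈ Set.Ico (0:ℝ) (1/2) by constructor <;> norm_num)] with ε hε
    rw [key ε hε.1 hε.2.le]
    ring
  · have ha' : a + 1 ≠ 0 := fun h => ha (by linarith)
    induction n with
    | zero =>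
      have hNL : NL (fun ε : ℝ => (1/2:ℝ) ^ (a+1) * Real.log (1/2) ^ 0 / (a+1)
          + (-(1/(a+1))) * (ε ^ (a+1) * Real.log ε ^ 0)) :=
        (NL_const _).add ((NL_monomial (a+1) 0).const_mul _)
      refine NL.congr ?_ hNL
      filter_upwards [Ioo_mem_nhdsGT_of_mem
        (show (0:ℝ) ∈ Set.Ico (0:ℝ) (1/2) by constructor <;> norm_num)] with ε hε
      have h := ftc_I a ha' 0 hε.1 hε.2.le
      simp only [Nat.cast_zero, zero_div, zero_mul, add_zero] at h
      rw [h]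
      field_simp
      ring
    | succ m ih =>
      have int1 : ∀ {ε : ℝ}, 0 < ε →
          IntervalIntegrable (fun t => t ^ a * Real.log t ^ (m+1)) volume ε (1/2) :=
        fun hε => intervalIntegrable_I a (m+1) hε (by norm_num)
      have int2 : ∀ {ε : ℝ}, 0 < ε → IntervalIntegrable
          (fun t => ((m+1 : ℝ) / (a+1)) * (t ^ a * Real.log t ^ m)) volume ε (1/2) :=
        fun hε => (intervalIntegrable_I a m hε (by norm_num)).const_mul _
      have hNL : NL (fun ε : ℝ => ((1/2:ℝ) ^ (a+1) * Real.log (1/2) ^ (m+1) / (a+1)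
          + (-(1/(a+1))) * (ε ^ (a+1) * Real.log ε ^ (m+1)))
          + (-((m+1:ℝ)/(a+1))) * (∫ t in ε..(1/2:ℝ), t ^ a * Real.log t ^ m)) :=
        ((NL_const _).add ((NL_monomial (a+1) (m+1)).const_mul _)).add (ih.const_mul _)
      refine NL.congr ?_ hNL
      filter_upwards [Ioo_mem_nhdsGT_of_mem
        (show (0:ℝ) ∈ Set.Ico (0:ℝ) (1/2) by constructor <;> norm_num)] with ε hε
      have h := ftc_I a ha' (m+1) hε.1 hε.2.le
      simp only [Nat.add_sub_cancel, Nat.cast_add, Nat.cast_one] at h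
      rw [intervalIntegral.integral_add (int1 hε.1) (int2 hε.1),
        intervalIntegral.integral_const_mul] at h
      have expand : (-(1/(a+1))) * (ε ^ (a+1) * Real.log ε ^ (m+1))
          = -(ε ^ (a+1) * Real.log ε ^ (m+1) / (a+1)) := by ring
      linarith [h]

lemma intervalIntegrable_J (a : ℝ) (n : ℕ) {u : ℝ} (hu : 0 < u) (hu2 : u ≤ 1/2) :
    IntervalIntegrable (fun t => t ^ a * Real.log t ^ n / (1 - t)) volume u (1/2) := by
  apply ContinuousOn.intervalIntegrable
  apply (cont2 a n).mono
  rw [Set.uIcc_of_le hu2]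
  intro t ht
  exact ⟨lt_of_lt_of_le hu ht.1, lt_of_le_of_lt ht.2 (by norm_num)⟩

lemma contOn_J_base (a : ℝ) (ha : 0 < a) (n : ℕ) :
    ContinuousOn (fun t : ℝ => t ^ a * Real.log t ^ n / (1 - t)) (Set.Icc 0 (1/2)) := by
  intro t ht
  rcases eq_or_ne t 0 with rfl | htne
  · -- continuity at 0
    have hval : (0:ℝ) ^ a * Real.log 0 ^ n / (1 - 0) = 0 := by
      rw [Real.zero_rpow ha.ne', Real.log_zero, zero_mul, zero_div]
    have hlim : Tendsto (fun t : ℝ => t ^ a * Real.log t ^ n / (1 - t))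
        (nhdsWithin 0 (Set.Ioi 0)) (nhds 0) := by
      have h2 : Tendsto (fun t : ℝ => (1 - t)⁻¹) (nhdsWithin (0:ℝ) (Set.Ioi 0)) (nhds 1) := by
        have : ContinuousAt (fun t : ℝ => (1 - t)⁻¹) 0 := by
          apply ContinuousAt.inv₀
          · exact continuousAt_const.sub continuousAt_id
          · norm_num
        simpa using this.tendsto.mono_left nhdsWithin_le_nhds
      have := (tendsto_rpow_mul_log_pow a ha n).mul h2
      rw [zero_mul] at this
      refine this.congr ?_
      intro t
      rw [div_eq_mul_inv]
    unfold ContinuousWithinAt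
    rw [show (fun t : ℝ => t ^ a * Real.log t ^ n / (1 - t)) 0 = 0 from hval]
    have hsub : nhdsWithin (0:ℝ) (Set.Icc 0 (1/2)) ≤
        nhdsWithin 0 ({0} ∪ Set.Ioi 0 : Set ℝ) := by
      apply nhdsWithin_mono
      intro t ht
      rcases eq_or_ne t 0 with rfl | h
      · exact Or.inl rfl
      · exact Or.inr (lt_of_le_of_ne ht.1 (Ne.symm h))
    refine Tendsto.mono_left ?_ hsub
    rw [nhdsWithin_union, nhdsWithin_singleton]
    rw [tendsto_sup]
    constructor
    · have h0 := tendsto_pure_nhds (fun t : ℝ => t ^ a * Real.log t ^ n / (1 - t)) 0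
      simp only [show ((fun t : ℝ => t ^ a * Real.log t ^ n / (1 - t)) 0 = 0) from hval] at h0
      exact h0
    · exact hlim
  · have ht0 : 0 < t := lt_of_le_of_ne ht.1 (Ne.symm htne)
    have ht1 : t < 1 := lt_of_le_of_lt ht.2 (by norm_num)
    exact ((cont2 a n).continuousAt (isOpen_Ioo.mem_nhds ⟨ht0, ht1⟩)).continuousWithinAt

lemma NL_J : ∀ (m : ℕ) (a : ℝ) (n : ℕ), 0 < a + m →
    NL (fun ε => ∫ t in ε..(1/2:ℝ), t ^ a * Real.log t ^ n / (1 - t)) := by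
  intro m
  induction m with
  | zero =>
    intro a n h
    rw [Nat.cast_zero, add_zero] at h
    apply NL_of_tendsto
    exact tendsto_left_endpoint ((contOn_J_base a h n).integrableOn_Icc)
  | succ m ih =>
    intro a n h
    have hstep : NL (fun ε => (∫ t in ε..(1/2:ℝ), t ^ a * Real.log t ^ n)
        + ∫ t in ε..(1/2:ℝ), t ^ (a+1) * Real.log t ^ n / (1 - t)) := by
      refine (NL_I a n).add (ih (a+1) n ?_)
      push_cast at h ⊢
      linarith
    refine NL.congr ?_ hstep
    filter_upwards [Ioo_mem_nhdsGT_of_mem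
      (show (0:ℝ) ∈ Set.Ico (0:ℝ) (1/2) by constructor <;> norm_num)] with ε hε
    have heq : Set.EqOn (fun t : ℝ => t ^ a * Real.log t ^ n / (1 - t))
        (fun t : ℝ => t ^ a * Real.log t ^ n + t ^ (a+1) * Real.log t ^ n / (1 - t))
        (Set.uIcc ε (1/2)) := by
      intro t ht
      rw [Set.uIcc_of_le hε.2.le] at ht
      have ht0 : 0 < t := lt_of_lt_of_le hε.1 ht.1
      have ht1 : t < 1 := lt_of_le_of_lt ht.2 (by norm_num)
      have h1t : (1:ℝ) - t ≠ 0 := sub_ne_zero_of_ne (Ne.symm (ne_of_lt ht1))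
      simp only []
      rw [Real.rpow_add_one ht0.ne']
      field_simp
      ring
    rw [intervalIntegral.integral_congr heq,
      intervalIntegral.integral_add (intervalIntegrable_I a n hε.1 (by norm_num))
      (intervalIntegrable_J (a+1) n hε.1 hε.2.le)]

lemma NL_near1 (x : ℝ) (n : ℕ) :
    NL (fun ε => ∫ t in (1/2:ℝ)..(1-ε), t ^ (x-1) * Real.log t ^ n / (1 - t)) := by
  set g : ℝ → ℝ := fun t => t ^ (x-1) * Real.log t ^ n with hg_def
  obtain ⟨d, hd⟩ : ∃ d, HasDerivAt g d 1 :=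
    ⟨_, (Real.hasDerivAt_rpow_const (x := 1) (p := x-1) (Or.inl one_ne_zero)).mul
      ((Real.hasDerivAt_log one_ne_zero).pow n)⟩
  set H : ℝ → ℝ := fun t => if t = 1 then -d else (g t - g 1) / (1 - t) with hH_def
  have hslope : Tendsto (fun t => (g t - g 1) / (1 - t)) (nhdsWithin 1 {(1:ℝ)}ᶜ) (nhds (-d)) := by
    have h1 := (hasDerivAt_iff_tendsto_slope.1 hd).neg
    refine h1.congr ?_
    intro t
    rw [slope_def_field, show (1:ℝ) - t = -(t - 1) by ring, div_neg]
  have hgcont : ∀ t : ℝ, 0 < t → ContinuousAt g t := by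
    intro t ht
    exact (cont1 (x-1) n).continuousAt (Ioi_mem_nhds ht)
  have hHcont : ContinuousOn H (Set.Icc (1/2:ℝ) 1) := by
    intro t ht
    rcases eq_or_ne t 1 with rfl | htne
    · unfold ContinuousWithinAt
      have hH1 : H 1 = -d := if_pos rfl
      rw [hH1]
      have hsub : nhdsWithin (1:ℝ) (Set.Icc (1/2) 1) ≤
          nhdsWithin 1 ({1} ∪ {(1:ℝ)}ᶜ : Set ℝ) := by
        apply nhdsWithin_mono
        intro t _
        rcases eq_or_ne t 1 with rfl | h
        · exact Or.inl rfl
        · exact Or.inr h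
      refine Tendsto.mono_left ?_ hsub
      rw [nhdsWithin_union, nhdsWithin_singleton, tendsto_sup]
      constructor
      · have h0 := tendsto_pure_nhds H 1
        rwa [hH1] at h0
      · refine hslope.congr' ?_
        filter_upwards [self_mem_nhdsWithin] with t (ht : t ≠ 1)
        exact (if_neg ht).symm
    · have ht0 : 0 < t := lt_of_lt_of_le (by norm_num) ht.1
      have hφ : ContinuousAt (fun t => (g t - g 1) / (1 - t)) t := by
        refine (((hgcont t ht0).sub continuousAt_const).div
          (continuousAt_const.sub continuousAt_id) ?_)
        exact sub_ne_zero_of_ne (Ne.symm htne)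
      refine (hφ.congr ?_).continuousWithinAt
      filter_upwards [isOpen_compl_singleton.mem_nhds htne] with s (hs : s ≠ 1)
      exact (if_neg hs).symm
  have hInt : IntegrableOn H (Set.Icc (1/2:ℝ) 1) volume := hHcont.integrableOn_Icc
  have limit1 := tendsto_right_endpoint hInt
  -- the log integral
  have philog : ∀ ε : ℝ, ε ∈ Set.Ioo (0:ℝ) (1/2) →
      ∫ t in (1/2:ℝ)..(1-ε), (1 - t)⁻¹ = -Real.log ε + Real.log (1/2) := by
    intro ε hε
    have hle : (1/2:ℝ) ≤ 1 - ε := by obtain ⟨h1, h2⟩ := hε; linarith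
    have hder : ∀ t ∈ Set.uIcc (1/2:ℝ) (1-ε),
        HasDerivAt (fun t : ℝ => -Real.log (1 - t)) ((1 - t)⁻¹) t := by
      intro t ht
      rw [Set.uIcc_of_le hle] at ht
      have h1t : (1:ℝ) - t ≠ 0 := by
        have := ht.2; obtain ⟨h1, _⟩ := hε
        have : t < 1 := by linarith
        exact sub_ne_zero_of_ne (Ne.symm (ne_of_lt this))
      have h1 : HasDerivAt (fun t : ℝ => 1 - t) (-1) t := (hasDerivAt_id t).const_sub 1
      have h2 := ((Real.hasDerivAt_log h1t).comp t h1).neg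
      have e : -((1 - t)⁻¹ * -1) = (1 - t)⁻¹ := by ring
      exact e ▸ h2
    have hint : IntervalIntegrable (fun t : ℝ => (1 - t)⁻¹) volume (1/2) (1-ε) := by
      apply ContinuousOn.intervalIntegrable
      refine (continuousOn_const.sub continuousOn_id).inv₀ ?_
      intro t ht
      rw [Set.uIcc_of_le hle] at ht
      have : t < 1 := by obtain ⟨h1, _⟩ := hε; have := ht.2; linarith
      exact sub_ne_zero_of_ne (Ne.symm (ne_of_lt this))
    rw [intervalIntegral.integral_eq_sub_of_hasDerivAt hder hint]
    rw [show (1:ℝ) - (1-ε) = ε by ring, show (1:ℝ) - 1/2 = 1/2 by norm_num]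
    ring
  -- negligible log term
  have hneg : Negligible (fun ε : ℝ => (-(g 1)) * Real.log ε ^ 1) := by
    refine ⟨∅, fun _ => 0, {1}, fun _ => -(g 1), by simp, by simp, fun ε => by simp⟩
  have hNL : NL (fun ε : ℝ => ((∫ t in (1/2:ℝ)..(1-ε), H t)
      + (-(g 1)) * Real.log ε ^ 1) + g 1 * Real.log (1/2)) :=
    ((NL_of_tendsto limit1).add (NL_negligible hneg)).add (NL_const _)
  refine NL.congr ?_ hNL
  filter_upwards [Ioo_mem_nhdsGT_of_mem
    (show (0:ℝ) ∈ Set.Ico (0:ℝ) (1/2) by constructor <;> norm_num)] with ε hε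
  have hle : (1/2:ℝ) ≤ 1 - ε := by obtain ⟨h1, h2⟩ := hε; linarith
  have heq : Set.EqOn (fun t : ℝ => H t + g 1 * (1 - t)⁻¹)
      (fun t : ℝ => t ^ (x-1) * Real.log t ^ n / (1 - t)) (Set.uIcc (1/2:ℝ) (1-ε)) := by
    intro t ht
    rw [Set.uIcc_of_le hle] at ht
    have ht1 : t < 1 := by obtain ⟨h1, _⟩ := hε; have := ht.2; linarith
    have h1t : (1:ℝ) - t ≠ 0 := sub_ne_zero_of_ne (Ne.symm (ne_of_lt ht1))
    have hHt : H t = (g t - g 1) / (1 - t) := if_neg (ne_of_lt ht1)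
    simp only [hHt]
    rw [show g 1 * (1 - t)⁻¹ = g 1 / (1 - t) by rw [div_eq_mul_inv],
      ← add_div, sub_add_cancel]
  have hintH : IntervalIntegrable H volume (1/2) (1-ε) := by
    apply ContinuousOn.intervalIntegrable
    apply hHcont.mono
    rw [Set.uIcc_of_le hle]
    intro t ht
    exact ⟨ht.1, le_trans ht.2 (by obtain ⟨h1, _⟩ := hε; linarith)⟩
  have hintinv : IntervalIntegrable (fun t : ℝ => g 1 * (1 - t)⁻¹) volume (1/2) (1-ε) := by
    apply ContinuousOn.intervalIntegrable
    apply ContinuousOn.mul continuousOn_const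
    refine (continuousOn_const.sub continuousOn_id).inv₀ ?_
    intro t ht
    rw [Set.uIcc_of_le hle] at ht
    have : t < 1 := by obtain ⟨h1, _⟩ := hε; have := ht.2; linarith
    exact sub_ne_zero_of_ne (Ne.symm (ne_of_lt this))
  have key : ∫ t in (1/2:ℝ)..(1-ε), t ^ (x-1) * Real.log t ^ n / (1 - t)
      = (∫ t in (1/2:ℝ)..(1-ε), H t) + g 1 * ∫ t in (1/2:ℝ)..(1-ε), (1 - t)⁻¹ := by
    rw [← intervalIntegral.integral_congr heq,
      intervalIntegral.integral_add hintH hintinv, intervalIntegral.integral_const_mul]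
  rw [key, philog ε hε, pow_one]
  ring

theorem stmt12 (x : ℝ) (n : ℕ) :
    ∃ c : ℝ, NeutrixLim (fun ε => ∫ t in Set.Ioo ε (1 - ε),
      t ^ (x - 1) * Real.log t ^ n / (1 - t)) c := by
  have hm : 0 < (x - 1) + ((⌈1 - x⌉₊ + 1 : ℕ) : ℝ) := by
    have := Nat.le_ceil (1 - x)
    push_cast
    linarith
  have near0 := NL_J (⌈1 - x⌉₊ + 1) (x - 1) n hm
  have near1 := NL_near1 x n
  have total := near0.add near1
  refine NL.congr ?_ total
  filter_upwards [Ioo_mem_nhdsGT_of_mem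
    (show (0:ℝ) ∈ Set.Ico (0:ℝ) (1/2) by constructor <;> norm_num)] with ε hε
  have hle : ε ≤ 1 - ε := by obtain ⟨h1, h2⟩ := hε; linarith
  have h1 : IntervalIntegrable (fun t : ℝ => t ^ (x-1) * Real.log t ^ n / (1 - t))
      volume ε (1/2) := intervalIntegrable_J (x-1) n hε.1 hε.2.le
  have h2 : IntervalIntegrable (fun t : ℝ => t ^ (x-1) * Real.log t ^ n / (1 - t))
      volume (1/2) (1-ε) := by
    apply ContinuousOn.intervalIntegrable
    apply (cont2 (x-1) n).mono
    have hle2 : (1/2:ℝ) ≤ 1 - ε := by obtain ⟨ha, hb⟩ := hε; linarith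
    rw [Set.uIcc_of_le hle2]
    intro t ht
    refine ⟨lt_of_lt_of_le (by norm_num) ht.1, ?_⟩
    obtain ⟨ha, _⟩ := hε
    have := ht.2
    linarith
  have split := intervalIntegral.integral_add_adjacent_intervals h1 h2
  rw [split]
  rw [intervalIntegral.integral_of_le hle, ← MeasureTheory.integral_Ioc_eq_integral_Ioo]
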